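/- Let e ≥ 2, n, d ∈ ℤ_{>0}, J = {1,…,e−1}. Fix (λ,c) with λ ∈ Λ(n,d), c ∈ J^n and for j ∈ J set d_j = Σ_{1≤r≤n, c_r=j} λ_r. For j ∈ J define Inc²(j) = {(i,l) ∈ (ℤ/eℤ) × J : i ∈ Inc(j) ∩ Inc(l)} where Inc(j)={j, j−1} ⊆ ℤ/eℤ. Then Σ_{b∈J^d} |{(T^0,…,T^{e−1}) tuples of 0-1-matrices in M(n,d) with T^0+⋯+T^{e−1} having row sums λ and all column sums 1 and t^i_{r,s}=0 unless i ∈ Inc(c_r)∩Inc(b_s)}| equals (d!/(λ_1!⋯λ_n!))·3^{d_1+d_{e−1}}·4^{Σ_{j=2}^{e−2} d_j} if e > 2, and equals (d!/(λ_1!⋯λ_n!))·2^{d_1} if e = 2. -/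

import Mathlib

open Finset

/-- For `j ∈ J = {1,…,e-1}`, the set `Inc(j) = {j, j-1} ⊆ I`. -/
def IncN (j : ℕ) : Finset ℕ := {j, j - 1}

lemma fibcnt_cons {d n : ℕ} (x : Fin n) (g : Fin d → Fin n) (r : Fin n) :
    #(univ.filter fun s : Fin (d+1) => (Fin.cons x g : Fin (d+1) → Fin n) s = r) =
      (if x = r then 1 else 0) + #(univ.filter fun s : Fin d => g s = r) := by
  rw [Finset.card_filter, Finset.card_filter, Fin.sum_univ_succ]
  simp

lemma piFinSucc_symm_eq_cons {d n : ℕ} (x : Fin n) (g' : Fin d → Fin n) :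
    (Fin.consEquiv (fun _ : Fin (d+1) => Fin n)) (x, g') = Fin.cons x g' := by
  ext s
  exact Fin.cases rfl (fun i => rfl) s

lemma multinomial_count : ∀ (d n : ℕ) (lam : Fin n → ℕ), (∑ r, lam r = d) →
    #(univ.filter (fun g : Fin d → Fin n =>
      ∀ r, #(univ.filter fun s => g s = r) = lam r)) * ∏ r, (lam r).factorial =
      d.factorial := by
  intro d
  induction d with
  | zero =>
    intro n lam hlam
    have h0 : ∀ r, lam r = 0 := fun r =>
      Finset.sum_eq_zero_iff.mp hlam r (mem_univ r)
    have : (univ.filter (fun g : Fin 0 → Fin n =>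
        ∀ r, #(univ.filter fun s => g s = r) = lam r)) = univ := by
      apply Finset.filter_true_of_mem
      intro g _ r
      simp [h0 r]
    rw [this]
    simp [h0]
  | succ d ih =>
    intro n lam hlam
    classical
    have step : ∀ x : Fin n, (if 1 ≤ lam x then
          #(univ.filter (fun g' : Fin d → Fin n =>
            ∀ r, #(univ.filter fun s => g' s = r) = lam r - (if x = r then 1 else 0)))
          else 0) * ∏ r, (lam r).factorial = lam x * d.factorial := by
      intro x
      by_cases hx : 1 ≤ lam x
      · rw [if_pos hx]
        have hsum' : ∑ r, (lam r - (if x = r then 1 else 0)) = d := by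
          have h2 : ∑ r, ((lam r - (if x = r then 1 else 0)) + (if x = r then 1 else 0))
              = ∑ r, lam r := by
            apply Finset.sum_congr rfl
            intro r _
            by_cases hxr : x = r
            · subst hxr; simp; omega
            · simp [hxr]
          rw [Finset.sum_add_distrib] at h2
          simp at h2
          omega
        have hfact : ∏ r, (lam r).factorial =
            lam x * ∏ r, (lam r - (if x = r then 1 else 0)).factorial := by
          rw [← Finset.mul_prod_erase univ (fun r => (lam r).factorial) (mem_univ x),
              ← Finset.mul_prod_erase univ
                (fun r => (lam r - (if x = r then 1 else 0)).factorial) (mem_univ x),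
              ← mul_assoc]
          congr 1
          · obtain ⟨k, hk⟩ := Nat.exists_eq_succ_of_ne_zero (by omega : lam x ≠ 0)
            rw [hk]
            simp [Nat.factorial_succ]
          · apply Finset.prod_congr rfl
            intro r hr
            have hxr : x ≠ r := fun h => (Finset.mem_erase.mp hr).1 h.symm
            simp [hxr]
        rw [hfact, ← mul_assoc, mul_comm _ (lam x), mul_assoc,
            ih n (fun r => lam r - (if x = r then 1 else 0)) hsum']
      · rw [if_neg hx]
        have : lam x = 0 := by omega
        simp [this]
    have key : #(univ.filter (fun g : Fin (d+1) → Fin n =>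
        ∀ r, #(univ.filter fun s => g s = r) = lam r)) =
        ∑ x : Fin n, if 1 ≤ lam x then
          #(univ.filter (fun g' : Fin d → Fin n =>
            ∀ r, #(univ.filter fun s => g' s = r) = lam r - (if x = r then 1 else 0)))
          else 0 := by
      rw [Finset.card_filter]
      rw [← Equiv.sum_comp (Fin.consEquiv (fun _ : Fin (d+1) => Fin n))]
      rw [Fintype.sum_prod_type]
      congr 1
      ext x
      by_cases hx : 1 ≤ lam x
      · rw [if_pos hx, Finset.card_filter]
        apply Finset.sum_congr rfl
        intro g' _
        have hcons : ∀ r, #(univ.filter fun s : Fin (d+1) =>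
            (Fin.consEquiv (fun _ : Fin (d+1) => Fin n)) (x, g') s = r) =
            (if x = r then 1 else 0) + #(univ.filter fun s : Fin d => g' s = r) := by
          intro r
          rw [piFinSucc_symm_eq_cons, fibcnt_cons]
        refine if_congr ?_ rfl rfl
        constructor
        · intro h r
          have := h r
          rw [hcons r] at this
          omega
        · intro h r
          rw [hcons r]
          have := h r
          by_cases hxr : x = r
          · subst hxr; simp at this ⊢; omega
          · simp [hxr] at this ⊢; omega
      · rw [if_neg hx]
        apply Finset.sum_eq_zero
        intro g' _
        rw [if_neg]
        intro h
        have := h x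
        rw [piFinSucc_symm_eq_cons, fibcnt_cons] at this
        simp at this
        omega
    rw [key, Finset.sum_mul]
    rw [Finset.sum_congr rfl (fun x _ => step x), ← Finset.sum_mul, hlam,
        Nat.factorial_succ]

section
variable {e n d : ℕ}

/-- the matrix tuple associated to a function `φ`. -/
def FT (φ : Fin d → Fin e × Fin n) : Fin e → Fin n → Fin d → ℕ :=
  fun i r s => if φ s = (i, r) then 1 else 0

lemma FT_sum_i (φ : Fin d → Fin e × Fin n) (r : Fin n) (s : Fin d) :
    ∑ i, FT φ i r s = if (φ s).2 = r then 1 else 0 := by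
  unfold FT
  by_cases h2 : (φ s).2 = r
  · simp [Prod.ext_iff, h2]
  · simp [Prod.ext_iff, h2]

lemma FT_row (φ : Fin d → Fin e × Fin n) (r : Fin n) :
    ∑ s, ∑ i, FT φ i r s = #(univ.filter fun s => (φ s).2 = r) := by
  rw [Finset.card_filter]
  exact Finset.sum_congr rfl fun s _ => FT_sum_i φ r s

lemma FT_col (φ : Fin d → Fin e × Fin n) (s : Fin d) :
    ∑ r, ∑ i, FT φ i r s = 1 := by
  rw [Finset.sum_congr rfl fun r (_ : r ∈ univ) => FT_sum_i φ r s]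
  simp

lemma cnt_card (lam : Fin n → ℕ) (c : Fin n → ℕ) (b : Fin d → ℕ) :
    Set.ncard {T : Fin e → Fin n → Fin d → ℕ |
        (∀ i r s, T i r s ≤ 1) ∧
        (∀ r, ∑ s, ∑ i, T i r s = lam r) ∧
        (∀ s, ∑ r, ∑ i, T i r s = 1) ∧
        (∀ (i : Fin e) r s, ¬((i : ℕ) ∈ IncN (c r) ∧ (i : ℕ) ∈ IncN (b s)) →
          T i r s = 0)} =
    #(univ.filter (fun φ : Fin d → Fin e × Fin n =>
        (∀ r, #(univ.filter fun s => (φ s).2 = r) = lam r) ∧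
        (∀ s, ((φ s).1 : ℕ) ∈ IncN (c (φ s).2) ∧ ((φ s).1 : ℕ) ∈ IncN (b s)))) := by
  classical
  have hset : {T : Fin e → Fin n → Fin d → ℕ |
        (∀ i r s, T i r s ≤ 1) ∧
        (∀ r, ∑ s, ∑ i, T i r s = lam r) ∧
        (∀ s, ∑ r, ∑ i, T i r s = 1) ∧
        (∀ (i : Fin e) r s, ¬((i : ℕ) ∈ IncN (c r) ∧ (i : ℕ) ∈ IncN (b s)) →
          T i r s = 0)} =
      ↑((univ.filter (fun φ : Fin d → Fin e × Fin n =>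
        (∀ r, #(univ.filter fun s => (φ s).2 = r) = lam r) ∧
        (∀ s, ((φ s).1 : ℕ) ∈ IncN (c (φ s).2) ∧ ((φ s).1 : ℕ) ∈ IncN (b s)))).image FT) := by
    ext T
    simp only [Set.mem_setOf_eq, Finset.coe_image, Set.mem_image, Finset.mem_coe,
      Finset.mem_filter, Finset.mem_univ, true_and]
    constructor
    · rintro ⟨hle, hrow, hcol, hsupp⟩
      -- extract the unique nonzero entry in each column
      have hex : ∀ s, ∃ p : Fin e × Fin n,
          T p.1 p.2 s = 1 ∧ ∀ q : Fin e × Fin n, q ≠ p → T q.1 q.2 s = 0 := by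
        intro s
        have hcol' : ∑ p : Fin e × Fin n, T p.1 p.2 s = 1 := by
          rw [Fintype.sum_prod_type]
          rw [Finset.sum_comm]
          exact hcol s
        have hpex : ∃ p : Fin e × Fin n, T p.1 p.2 s ≠ 0 := by
          by_contra h
          push_neg at h
          rw [Finset.sum_eq_zero (fun p _ => h p)] at hcol'
          exact absurd hcol'.symm one_ne_zero
        obtain ⟨p, hp⟩ := hpex
        have hp1 : T p.1 p.2 s = 1 := le_antisymm (hle _ _ _) (Nat.one_le_iff_ne_zero.mpr hp)
        refine ⟨p, hp1, ?_⟩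
        have hze : ∑ q ∈ univ.erase p, T q.1 q.2 s = 0 := by
          have h3 := Finset.add_sum_erase univ (fun q : Fin e × Fin n => T q.1 q.2 s)
            (mem_univ p)
          have h4 : T p.1 p.2 s + ∑ q ∈ univ.erase p, T q.1 q.2 s = 1 := by
            rw [← hcol']
            exact h3
          omega
        intro q hq
        exact Finset.sum_eq_zero_iff.mp hze q (Finset.mem_erase.mpr ⟨hq, mem_univ q⟩)
      choose φ hφ1 hφ2 using hex
      have hTF : T = FT φ := by
        funext i r s
        by_cases h : φ s = (i, r)
        · rw [FT, if_pos h]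
          have := hφ1 s
          rw [h] at this
          exact this
        · rw [FT, if_neg h]
          exact hφ2 s (i, r) (fun hh => h hh.symm)
      refine ⟨φ, ⟨?_, ?_⟩, hTF.symm⟩
      · intro r
        rw [← FT_row φ r, ← hTF]
        exact hrow r
      · intro s
        by_contra hcon
        have := hsupp (φ s).1 (φ s).2 s hcon
        rw [hφ1 s] at this
        exact one_ne_zero this
    · rintro ⟨φ, ⟨hfib, hinc⟩, rfl⟩
      refine ⟨?_, ?_, ?_, ?_⟩
      · intro i r s
        unfold FT
        split <;> omega
      · intro r
        rw [FT_row]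
        exact hfib r
      · intro s
        exact FT_col φ s
      · intro i r s hmem
        have hne : φ s ≠ (i, r) := by
          intro h
          apply hmem
          have := hinc s
          rw [h] at this
          exact this
        show (if φ s = (i, r) then 1 else 0) = 0
        rw [if_neg hne]
  rw [hset, Set.ncard_coe_finset]
  apply Finset.card_image_of_injective
  intro φ ψ h
  funext s
  have h1 : FT φ (φ s).1 (φ s).2 s = 1 := by
    rw [FT]
    simp
  rw [h] at h1
  have : ψ s = ((φ s).1, (φ s).2) := by
    by_contra hc
    rw [FT, if_neg hc] at h1
    exact one_ne_zero h1.symm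
  rw [this]

end

lemma count_val (e v : ℕ) : ∑ β : Fin e, (if (β:ℕ) = v then (1:ℕ) else 0) =
    if v < e then 1 else 0 := by
  rw [Fin.sum_univ_eq_sum_range (fun k => if k = v then (1:ℕ) else 0) e,
    Finset.sum_ite_eq' (Finset.range e) v (fun _ => 1)]
  simp

lemma sum_beta (e v : ℕ) (he : 1 ≤ e) (hv : v ≤ e - 1) :
    ∑ β : Fin e, (if ((β:ℕ) ≠ 0 ∧ v ∈ IncN (β:ℕ)) then (1:ℕ) else 0)
    = (if 1 ≤ v then 1 else 0) + (if v + 1 ≤ e - 1 then 1 else 0) := by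
  have hpt : ∀ β : Fin e, (if ((β:ℕ) ≠ 0 ∧ v ∈ IncN (β:ℕ)) then (1:ℕ) else 0)
      = (if ((β:ℕ) = v ∧ 1 ≤ v) then 1 else 0) + (if (β:ℕ) = v + 1 then 1 else 0) := by
    intro β
    simp only [IncN, Finset.mem_insert, Finset.mem_singleton]
    split_ifs <;> omega
  rw [Finset.sum_congr rfl fun β _ => hpt β, Finset.sum_add_distrib]
  congr 1
  · by_cases h1 : 1 ≤ v
    · simp only [h1, and_true, if_true]
      rw [count_val, if_pos (by omega)]
    · simp [h1]
  · rw [count_val]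
    refine if_congr ?_ rfl rfl
    omega

lemma wval (e : ℕ) (he : 2 ≤ e) (j : ℕ) (hj1 : 1 ≤ j) (hj2 : j ≤ e - 1) :
    ∑ i : Fin e, ∑ β : Fin e,
      (if ((β:ℕ) ≠ 0 ∧ ((i:ℕ) ∈ IncN j ∧ (i:ℕ) ∈ IncN (β:ℕ))) then (1:ℕ) else 0)
    = 2 + (if j ≤ e - 2 then 1 else 0) + (if 2 ≤ j then 1 else 0) := by
  have hin : ∀ i : Fin e, ∑ β : Fin e,
      (if ((β:ℕ) ≠ 0 ∧ ((i:ℕ) ∈ IncN j ∧ (i:ℕ) ∈ IncN (β:ℕ))) then (1:ℕ) else 0)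
      = (if (i:ℕ) ∈ IncN j then 1 else 0) *
        ((if 1 ≤ (i:ℕ) then 1 else 0) + (if (i:ℕ) + 1 ≤ e - 1 then 1 else 0)) := by
    intro i
    by_cases hi : (i:ℕ) ∈ IncN j
    · rw [if_pos hi, one_mul,
        ← sum_beta e (i:ℕ) (by omega) (by have := i.isLt; omega)]
      apply Finset.sum_congr rfl
      intro β _
      refine if_congr ?_ rfl rfl
      tauto
    · rw [if_neg hi, zero_mul]
      apply Finset.sum_eq_zero
      intro β _
      rw [if_neg]
      tauto
  rw [Finset.sum_congr rfl fun i _ => hin i]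
  have hpt : ∀ i : Fin e, (if (i:ℕ) ∈ IncN j then (1:ℕ) else 0) *
      ((if 1 ≤ (i:ℕ) then 1 else 0) + (if (i:ℕ) + 1 ≤ e - 1 then 1 else 0))
      = (if (i:ℕ) = j then 1 else 0) *
          ((if 1 ≤ j then 1 else 0) + (if j + 1 ≤ e - 1 then 1 else 0))
      + (if (i:ℕ) = j - 1 then 1 else 0) *
          ((if 1 ≤ j - 1 then 1 else 0) + (if j - 1 + 1 ≤ e - 1 then 1 else 0)) := by
    intro i
    simp only [IncN, Finset.mem_insert, Finset.mem_singleton]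
    split_ifs <;> omega
  rw [Finset.sum_congr rfl fun i _ => hpt i, Finset.sum_add_distrib,
    ← Finset.sum_mul, ← Finset.sum_mul, count_val, count_val,
    if_pos (by omega : j < e), if_pos (by omega : j - 1 < e), one_mul, one_mul]
  split_ifs <;> omega

lemma main_count (e n d : ℕ) (he : 2 ≤ e) (lam : Fin n → ℕ) (hlam : ∑ r, lam r = d)
    (c : Fin n → ℕ) (hc : ∀ r, 1 ≤ c r ∧ c r ≤ e - 1) :
    ∑ b ∈ univ.filter (fun b : Fin d → Fin e => ∀ s, (b s : ℕ) ≠ 0),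
      #(univ.filter (fun φ : Fin d → Fin e × Fin n =>
        (∀ r, #(univ.filter fun s => (φ s).2 = r) = lam r) ∧
        (∀ s, ((φ s).1 : ℕ) ∈ IncN (c (φ s).2) ∧ ((φ s).1 : ℕ) ∈ IncN ((b s : ℕ))))) =
      Nat.multinomial univ lam *
        ∏ r, (2 + (if c r ≤ e - 2 then 1 else 0) + (if 2 ≤ c r then 1 else 0)) ^ lam r := by
  classical
  have hN : #(univ.filter (fun g : Fin d → Fin n =>
      ∀ r, #(univ.filter fun s => g s = r) = lam r)) = Nat.multinomial univ lam := by
    have h1 := multinomial_count d n lam hlam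
    have h2 := Nat.multinomial_spec univ lam
    rw [hlam] at h2
    have hpos : 0 < ∏ r, (lam r).factorial :=
      Finset.prod_pos fun r _ => (lam r).factorial_pos
    apply Nat.eq_of_mul_eq_mul_right hpos
    rw [h1, ← h2, mul_comm]
  calc
  ∑ b ∈ univ.filter (fun b : Fin d → Fin e => ∀ s, (b s : ℕ) ≠ 0),
      #(univ.filter (fun φ : Fin d → Fin e × Fin n =>
        (∀ r, #(univ.filter fun s => (φ s).2 = r) = lam r) ∧
        (∀ s, ((φ s).1 : ℕ) ∈ IncN (c (φ s).2) ∧ ((φ s).1 : ℕ) ∈ IncN ((b s : ℕ)))))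
    = ∑ b ∈ univ.filter (fun b : Fin d → Fin e => ∀ s, (b s : ℕ) ≠ 0),
        ∑ φ : Fin d → Fin e × Fin n,
          (if (∀ r, #(univ.filter fun s => (φ s).2 = r) = lam r) then (1:ℕ) else 0) *
          ∏ s, (if (((φ s).1 : ℕ) ∈ IncN (c (φ s).2) ∧ ((φ s).1 : ℕ) ∈ IncN ((b s : ℕ)))
            then (1:ℕ) else 0) := by
      apply Finset.sum_congr rfl
      intro b _
      rw [Finset.card_filter]
      apply Finset.sum_congr rfl
      intro φ _
      have hprod : (∏ s, (if (((φ s).1 : ℕ) ∈ IncN (c (φ s).2) ∧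
            ((φ s).1 : ℕ) ∈ IncN ((b s : ℕ))) then (1:ℕ) else 0)) =
          if (∀ s, ((φ s).1 : ℕ) ∈ IncN (c (φ s).2) ∧ ((φ s).1 : ℕ) ∈ IncN ((b s : ℕ)))
            then 1 else 0 := by
        rw [Finset.prod_boole]
        by_cases h : (∀ s, ((φ s).1 : ℕ) ∈ IncN (c (φ s).2) ∧
            ((φ s).1 : ℕ) ∈ IncN ((b s : ℕ)))
        · rw [if_pos h, if_pos (fun s _ => h s)]
        · rw [if_neg h, if_neg (fun hh => h (fun s => hh s (mem_univ s)))]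
      rw [hprod]
      by_cases hP : (∀ r, #(univ.filter fun s => (φ s).2 = r) = lam r) <;>
        by_cases hQ : (∀ s, ((φ s).1 : ℕ) ∈ IncN (c (φ s).2) ∧
          ((φ s).1 : ℕ) ∈ IncN ((b s : ℕ))) <;>
        simp [hP, hQ]
  _ = ∑ φ : Fin d → Fin e × Fin n,
        ∑ b ∈ univ.filter (fun b : Fin d → Fin e => ∀ s, (b s : ℕ) ≠ 0),
          (if (∀ r, #(univ.filter fun s => (φ s).2 = r) = lam r) then (1:ℕ) else 0) *
          ∏ s, (if (((φ s).1 : ℕ) ∈ IncN (c (φ s).2) ∧ ((φ s).1 : ℕ) ∈ IncN ((b s : ℕ)))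
            then (1:ℕ) else 0) := Finset.sum_comm
  _ = ∑ φ : Fin d → Fin e × Fin n,
        (if (∀ r, #(univ.filter fun s => (φ s).2 = r) = lam r) then (1:ℕ) else 0) *
        ∏ s, ∑ β : Fin e, (if ((β:ℕ) ≠ 0 ∧ (((φ s).1 : ℕ) ∈ IncN (c (φ s).2) ∧
          ((φ s).1 : ℕ) ∈ IncN ((β:ℕ)))) then (1:ℕ) else 0) := by
      apply Finset.sum_congr rfl
      intro φ _
      rw [← Finset.mul_sum]
      congr 1
      have hB : univ.filter (fun b : Fin d → Fin e => ∀ s, (b s : ℕ) ≠ 0) =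
          Fintype.piFinset (fun _ : Fin d => univ.filter (fun β : Fin e => (β:ℕ) ≠ 0)) := by
        ext b
        simp [Fintype.mem_piFinset]
      rw [hB]
      refine Eq.trans (Finset.prod_univ_sum
        (fun _ : Fin d => univ.filter (fun β : Fin e => (β:ℕ) ≠ 0))
        (fun s β => if (((φ s).1 : ℕ) ∈ IncN (c (φ s).2) ∧
          ((φ s).1 : ℕ) ∈ IncN ((β:ℕ))) then (1:ℕ) else 0)).symm ?_
      apply Finset.prod_congr rfl
      intro s _
      rw [Finset.sum_filter]
      apply Finset.sum_congr rfl
      intro β _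
      by_cases h1 : (β:ℕ) ≠ 0 <;> simp [h1]
  _ = ∑ p : (Fin d → Fin e) × (Fin d → Fin n),
        (if (∀ r, #(univ.filter fun s => p.2 s = r) = lam r) then (1:ℕ) else 0) *
        ∏ s, ∑ β : Fin e, (if ((β:ℕ) ≠ 0 ∧ ((p.1 s : ℕ) ∈ IncN (c (p.2 s)) ∧
          (p.1 s : ℕ) ∈ IncN ((β:ℕ)))) then (1:ℕ) else 0) :=
      Fintype.sum_equiv (Equiv.arrowProdEquivProdArrow (Fin d) (fun _ => Fin e) (fun _ => Fin n)) _ _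
        (fun φ => rfl)
  _ = ∑ ι : Fin d → Fin e, ∑ g : Fin d → Fin n,
        (if (∀ r, #(univ.filter fun s => g s = r) = lam r) then (1:ℕ) else 0) *
        ∏ s, ∑ β : Fin e, (if ((β:ℕ) ≠ 0 ∧ ((ι s : ℕ) ∈ IncN (c (g s)) ∧
          (ι s : ℕ) ∈ IncN ((β:ℕ)))) then (1:ℕ) else 0) := Fintype.sum_prod_type _
  _ = ∑ g : Fin d → Fin n, ∑ ι : Fin d → Fin e,
        (if (∀ r, #(univ.filter fun s => g s = r) = lam r) then (1:ℕ) else 0) *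
        ∏ s, ∑ β : Fin e, (if ((β:ℕ) ≠ 0 ∧ ((ι s : ℕ) ∈ IncN (c (g s)) ∧
          (ι s : ℕ) ∈ IncN ((β:ℕ)))) then (1:ℕ) else 0) := Finset.sum_comm
  _ = ∑ g : Fin d → Fin n,
        (if (∀ r, #(univ.filter fun s => g s = r) = lam r) then (1:ℕ) else 0) *
        ∏ s, (2 + (if c (g s) ≤ e - 2 then 1 else 0) + (if 2 ≤ c (g s) then 1 else 0)) := by
      apply Finset.sum_congr rfl
      intro g _
      rw [← Finset.mul_sum]
      congr 1
      rw [show (univ : Finset (Fin d → Fin e)) =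
          Fintype.piFinset (fun _ : Fin d => (univ : Finset (Fin e))) from
          Fintype.piFinset_univ.symm]
      refine Eq.trans (Finset.prod_univ_sum
        (fun _ : Fin d => (univ : Finset (Fin e)))
        (fun s i => ∑ β : Fin e, if ((β:ℕ) ≠ 0 ∧ ((i:ℕ) ∈ IncN (c (g s)) ∧
          (i:ℕ) ∈ IncN ((β:ℕ)))) then (1:ℕ) else 0)).symm ?_
      apply Finset.prod_congr rfl
      intro s _
      exact wval e he (c (g s)) (hc (g s)).1 (hc (g s)).2
  _ = ∑ g : Fin d → Fin n,
        (if (∀ r, #(univ.filter fun s => g s = r) = lam r) then (1:ℕ) else 0) *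
        ∏ r, (2 + (if c r ≤ e - 2 then 1 else 0) + (if 2 ≤ c r then 1 else 0)) ^ lam r := by
      apply Finset.sum_congr rfl
      intro g _
      by_cases hg : (∀ r, #(univ.filter fun s => g s = r) = lam r)
      · rw [if_pos hg, one_mul, one_mul]
        rw [← Finset.prod_fiberwise_of_maps_to (fun s (_ : s ∈ univ) => mem_univ (g s))
          (fun s => (2 + (if c (g s) ≤ e - 2 then 1 else 0) + (if 2 ≤ c (g s) then 1 else 0)))]
        apply Finset.prod_congr rfl
        intro r _
        calc ∏ s ∈ univ.filter (fun s => g s = r),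
              (2 + (if c (g s) ≤ e - 2 then 1 else 0) + (if 2 ≤ c (g s) then 1 else 0))
            = ∏ _s ∈ univ.filter (fun s => g s = r),
              (2 + (if c r ≤ e - 2 then 1 else 0) + (if 2 ≤ c r then 1 else 0)) := by
              apply Finset.prod_congr rfl
              intro s hs
              rw [(Finset.mem_filter.mp hs).2]
          _ = (2 + (if c r ≤ e - 2 then 1 else 0) + (if 2 ≤ c r then 1 else 0)) ^ lam r := by
              rw [Finset.prod_const, hg r]
      · rw [if_neg hg, zero_mul, zero_mul]
  _ = #(univ.filter (fun g : Fin d → Fin n =>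
        ∀ r, #(univ.filter fun s => g s = r) = lam r)) *
        ∏ r, (2 + (if c r ≤ e - 2 then 1 else 0) + (if 2 ≤ c r then 1 else 0)) ^ lam r := by
      rw [← Finset.sum_mul, ← Finset.card_filter]
  _ = Nat.multinomial univ lam *
        ∏ r, (2 + (if c r ≤ e - 2 then 1 else 0) + (if 2 ≤ c r then 1 else 0)) ^ lam r := by
      rw [hN]

/-- Summing the counts of 0-1 matrix tuples over all
colourings `b ∈ J^d` gives `|𝔖_d : 𝔖_λ| · 3^{d_1+d_{e-1}} · 4^{∑_{j=2}^{e-2} d_j}`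
when `e > 2`, and `|𝔖_d : 𝔖_λ| · 2^{d_1}` when `e = 2`. -/
theorem colored_matrix_count
    (e n d : ℕ) (he : 2 ≤ e) (hn : 1 ≤ n) (hd : 1 ≤ d)
    (lam : Fin n → ℕ) (hlam : ∑ r, lam r = d)
    (c : Fin n → ℕ) (hc : ∀ r, 1 ≤ c r ∧ c r ≤ e - 1)
    (dd : ℕ → ℕ)
    (hdd : ∀ j, dd j = ∑ r ∈ Finset.univ.filter (fun r => c r = j), lam r)
    (cnt : (Fin d → ℕ) → ℕ)
    (hcnt : ∀ b : Fin d → ℕ, cnt b = Set.ncard {T : Fin e → Fin n → Fin d → ℕ |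
        (∀ i r s, T i r s ≤ 1) ∧
        (∀ r, ∑ s, ∑ i, T i r s = lam r) ∧
        (∀ s, ∑ r, ∑ i, T i r s = 1) ∧
        (∀ (i : Fin e) r s, ¬((i : ℕ) ∈ IncN (c r) ∧ (i : ℕ) ∈ IncN (b s)) →
          T i r s = 0)}) :
    (2 < e →
      ∑ b ∈ Finset.univ.filter (fun b : Fin d → Fin e => ∀ s, (b s : ℕ) ≠ 0),
          cnt (fun s => (b s : ℕ)) =
        Nat.multinomial Finset.univ lam * 3 ^ (dd 1 + dd (e - 1)) *
          4 ^ (∑ j ∈ Finset.Icc 2 (e - 2), dd j)) ∧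
    (e = 2 →
      ∑ b ∈ Finset.univ.filter (fun b : Fin d → Fin e => ∀ s, (b s : ℕ) ≠ 0),
          cnt (fun s => (b s : ℕ)) =
        Nat.multinomial Finset.univ lam * 2 ^ (dd 1)) := by
  classical
  have h0 : ∑ b ∈ Finset.univ.filter (fun b : Fin d → Fin e => ∀ s, (b s : ℕ) ≠ 0),
      cnt (fun s => (b s : ℕ)) =
      Nat.multinomial univ lam *
        ∏ r, (2 + (if c r ≤ e - 2 then 1 else 0) + (if 2 ≤ c r then 1 else 0)) ^ lam r := by
    rw [← main_count e n d he lam hlam c hc]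
    apply Finset.sum_congr rfl
    intro b _
    rw [hcnt]
    exact cnt_card lam c (fun s => (b s : ℕ))
  constructor
  · -- e > 2
    intro he3
    rw [h0, mul_assoc]
    clear h0 hcnt cnt
    congr 1
    rw [← Finset.prod_filter_mul_prod_filter_not univ (fun r => c r = 1)
        (fun r => (2 + (if c r ≤ e - 2 then 1 else 0) + (if 2 ≤ c r then 1 else 0)) ^ lam r),
      ← Finset.prod_filter_mul_prod_filter_not (univ.filter (fun r => ¬c r = 1))
        (fun r => c r = e - 1)
        (fun r => (2 + (if c r ≤ e - 2 then 1 else 0) + (if 2 ≤ c r then 1 else 0)) ^ lam r),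
      ← mul_assoc]
    have hA : ∏ r ∈ univ.filter (fun r => c r = 1),
        (2 + (if c r ≤ e - 2 then 1 else 0) + (if 2 ≤ c r then 1 else 0)) ^ lam r =
        3 ^ dd 1 := by
      rw [hdd 1, ← Finset.prod_pow_eq_pow_sum]
      apply Finset.prod_congr rfl
      intro r hr
      have h1 : c r = 1 := (Finset.mem_filter.mp hr).2
      rw [h1, if_pos (by omega : (1:ℕ) ≤ e - 2), if_neg (by omega : ¬(2:ℕ) ≤ 1)]
    have hBset : (univ.filter (fun r => ¬c r = 1)).filter (fun r => c r = e - 1) =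
        univ.filter (fun r => c r = e - 1) := by
      ext r
      simp only [Finset.mem_filter, Finset.mem_univ, true_and]
      constructor
      · tauto
      · intro h
        exact ⟨by omega, h⟩
    have hB : ∏ r ∈ (univ.filter (fun r => ¬c r = 1)).filter (fun r => c r = e - 1),
        (2 + (if c r ≤ e - 2 then 1 else 0) + (if 2 ≤ c r then 1 else 0)) ^ lam r =
        3 ^ dd (e - 1) := by
      rw [hBset, hdd (e - 1), ← Finset.prod_pow_eq_pow_sum]
      apply Finset.prod_congr rfl
      intro r hr
      have h1 : c r = e - 1 := (Finset.mem_filter.mp hr).2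
      rw [h1, if_neg (by omega : ¬ e - 1 ≤ e - 2), if_pos (by omega : 2 ≤ e - 1)]
    have hC : ∏ r ∈ (univ.filter (fun r => ¬c r = 1)).filter (fun r => ¬c r = e - 1),
        (2 + (if c r ≤ e - 2 then 1 else 0) + (if 2 ≤ c r then 1 else 0)) ^ lam r =
        4 ^ (∑ j ∈ Finset.Icc 2 (e - 2), dd j) := by
      have hsum : ∑ j ∈ Finset.Icc 2 (e - 2), dd j =
          ∑ r ∈ (univ.filter (fun r => ¬c r = 1)).filter (fun r => ¬c r = e - 1), lam r := by
        calc ∑ j ∈ Finset.Icc 2 (e - 2), dd j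
            = ∑ j ∈ Finset.Icc 2 (e - 2), ∑ r ∈ ((univ.filter (fun r => ¬c r = 1)).filter
                (fun r => ¬c r = e - 1)).filter (fun r => c r = j), lam r := by
              apply Finset.sum_congr rfl
              intro j hj
              rw [hdd j]
              congr 1
              ext r
              simp only [Finset.mem_filter, Finset.mem_univ, true_and, Finset.mem_Icc] at hj ⊢
              constructor
              · intro h
                exact ⟨⟨by omega, by omega⟩, h⟩
              · tauto
          _ = ∑ r ∈ (univ.filter (fun r => ¬c r = 1)).filter (fun r => ¬c r = e - 1),
                lam r := by
              apply Finset.sum_fiberwise_of_maps_to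
              intro r hr
              simp only [Finset.mem_filter, Finset.mem_univ, true_and] at hr
              have := hc r
              simp only [Finset.mem_Icc]
              omega
      rw [hsum, ← Finset.prod_pow_eq_pow_sum]
      apply Finset.prod_congr rfl
      intro r hr
      simp only [Finset.mem_filter, Finset.mem_univ, true_and] at hr
      have := hc r
      rw [if_pos (by omega : c r ≤ e - 2), if_pos (by omega : 2 ≤ c r)]
    rw [hA, hB, hC, ← pow_add]
  · -- e = 2
    intro he2
    subst he2
    rw [h0]
    clear h0 hcnt cnt
    congr 1
    have hc1 : ∀ r, c r = 1 := by
      intro r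
      have := hc r
      omega
    calc ∏ r, ((2 + if c r ≤ 2 - 2 then 1 else 0) + if 2 ≤ c r then 1 else 0) ^ lam r
        = ∏ r : Fin n, 2 ^ lam r := by
          apply Finset.prod_congr rfl
          intro r _
          rw [hc1 r]
          norm_num
      _ = 2 ^ (∑ r, lam r) := Finset.prod_pow_eq_pow_sum univ lam 2
      _ = 2 ^ dd 1 := by
          congr 1
          rw [hdd 1]
          apply Finset.sum_congr
          · rw [Finset.filter_true_of_mem (fun r _ => hc1 r)]
          · intros; rfl
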